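/- Let I ⊆ ℤ² be a finite spread and let z₁, ..., zₙ be its minimal elements ordered by increasing y-coordinate. Then for every i with 1 ≤ i < n, the join zᵢ ∨ zᵢ₊₁ (componentwise maximum) belongs to I. -/

import Mathlib

/-- A subset of a poset is poset-convex. -/
def PosetConvex {α : Type*} [Preorder α] (S : Set α) : Prop :=
  ∀ ⦃x y z : α⦄, x ≤ y → y ≤ z → x ∈ S → z ∈ S → y ∈ S

/-- A subset of a poset is poset-connected: nonempty, and any two of its elements are
joined by a finite zigzag of comparable elements staying in the set. -/
def PosetConnected {α : Type*} [Preorder α] (S : Set α) : Prop :=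
  S.Nonempty ∧ ∀ x ∈ S, ∀ y ∈ S, ∃ (n : ℕ) (c : ℕ → α), c 0 = x ∧ c n = y ∧
    (∀ i ≤ n, c i ∈ S) ∧ ∀ i < n, c i ≤ c (i + 1) ∨ c (i + 1) ≤ c i

/-- **Joins of consecutive minima of a finite spread lie in the spread.**
Let `I ⊆ ℤ²` (product order) be a finite spread, and let `z, z'` be minimal
elements of `I` that are consecutive in the `y`-ordering of the minimal elements
(i.e. `z.2 < z'.2` and no minimal element of `I` has `y`-coordinate strictly
between them).  Then the componentwise join `z ⊔ z'` belongs to `I`. -/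
theorem stmt4 (I : Set (ℤ × ℤ)) (hfin : I.Finite)
    (hconv : PosetConvex I) (hconn : PosetConnected I)
    (z z' : ℤ × ℤ)
    (hz : z ∈ I) (hzmin : ∀ w ∈ I, w ≤ z → w = z)
    (hz' : z' ∈ I) (hz'min : ∀ w ∈ I, w ≤ z' → w = z')
    (hlt : z.2 < z'.2)
    (hconsec : ∀ w ∈ I, (∀ v ∈ I, v ≤ w → v = w) → ¬(z.2 < w.2 ∧ w.2 < z'.2)) :
    z ⊔ z' ∈ I := by
  classical
  -- the two "sides" an element of `I` can be on, according to a minimal element below it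
  set P : ℤ × ℤ → Prop :=
    fun w => ∃ m ∈ I, (∀ v ∈ I, v ≤ m → v = m) ∧ m ≤ w ∧ m.2 ≤ z.2 with hP
  set Q : ℤ × ℤ → Prop :=
    fun w => ∃ m ∈ I, (∀ v ∈ I, v ≤ m → v = m) ∧ m ≤ w ∧ z'.2 ≤ m.2 with hQ
  -- every element of `I` satisfies `P` or `Q`
  have hPQ : ∀ w ∈ I, P w ∨ Q w := by
    intro w hw
    obtain ⟨m, hmle, hmmin⟩ := hfin.exists_le_minimal hw
    have hmI : m ∈ I := hmmin.1
    have hmin' : ∀ v ∈ I, v ≤ m → v = m := fun v hv hvm =>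
      le_antisymm hvm (hmmin.2 hv hvm)
    rcases le_or_gt m.2 z.2 with h | h
    · exact Or.inl ⟨m, hmI, hmin', hmle, h⟩
    · have := hconsec m hmI hmin'
      have h2 : z'.2 ≤ m.2 := by
        by_contra hc
        exact this ⟨h, lt_of_not_ge hc⟩
      exact Or.inr ⟨m, hmI, hmin', hmle, h2⟩
  -- `P` and `Q` are upward closed
  have hPup : ∀ {u v : ℤ × ℤ}, u ≤ v → P u → P v := by
    rintro u v huv ⟨m, hmI, hmin, hmu, h2⟩
    exact ⟨m, hmI, hmin, hmu.trans huv, h2⟩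
  have hQup : ∀ {u v : ℤ × ℤ}, u ≤ v → Q u → Q v := by
    rintro u v huv ⟨m, hmI, hmin, hmu, h2⟩
    exact ⟨m, hmI, hmin, hmu.trans huv, h2⟩
  have hPz : P z := ⟨z, hz, hzmin, le_refl z, le_refl _⟩
  -- walk along a zigzag from z to z' to find a point satisfying both P and Q
  obtain ⟨n, c, hc0, hcn, hmem, hcomp⟩ := hconn.2 z hz z' hz'
  have key : ∀ i, i ≤ n → Q (c i) → ∃ w ∈ I, P w ∧ Q w := by
    intro i
    induction i with
    | zero =>
      intro _ hQ0
      exact ⟨c 0, hmem 0 (Nat.zero_le n), hc0 ▸ hPz, hQ0⟩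
    | succ k ih =>
      intro hkn hQk
      by_cases hQ : Q (c k)
      · exact ih (Nat.le_of_succ_le hkn) hQ
      · rcases hcomp k (Nat.lt_of_succ_le hkn) with h | h
        · have hPk : P (c k) :=
            ((hPQ (c k) (hmem k (Nat.le_of_succ_le hkn))).resolve_right hQ)
          exact ⟨c (k + 1), hmem (k + 1) hkn, hPup h hPk, hQk⟩
        · exact absurd (hQup h hQk) hQ
  have hQn : Q (c n) := hcn ▸ ⟨z', hz', hz'min, le_refl z', le_refl _⟩
  obtain ⟨w, hwI, ⟨m, hmI, hmmin, hmw, hm2⟩, ⟨m', hm'I, _, hm'w, hm'2⟩⟩ :=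
    key n le_rfl hQn
  -- x-coordinate comparisons
  have hz1m1 : z.1 ≤ m.1 := by
    by_contra hc
    have hmz : m ≤ z := ⟨le_of_lt (lt_of_not_ge hc), hm2⟩
    have := hzmin m hmI hmz
    exact hc (le_of_eq (congrArg Prod.fst this).symm)
  have hz'1 : z'.1 ≤ z.1 := by
    by_contra hc
    have hzz' : z ≤ z' := ⟨le_of_lt (lt_of_not_ge hc), le_of_lt hlt⟩
    have := hz'min z hz hzz'
    exact absurd (congrArg Prod.snd this) (ne_of_lt hlt)
  -- the join is (z.1, z'.2)
  have hjoin : z ⊔ z' = (z.1, z'.2) := by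
    have : z ⊔ z' = (max z.1 z'.1, max z.2 z'.2) := rfl
    rw [this, max_eq_left hz'1, max_eq_right (le_of_lt hlt)]
  -- squeeze: z ≤ z ⊔ z' ≤ w
  have h1 : z ≤ z ⊔ z' := le_sup_left
  have h2 : z ⊔ z' ≤ w := by
    rw [hjoin]
    exact ⟨hz1m1.trans hmw.1, hm'2.trans hm'w.2⟩
  exact hconv h1 h2 hz hwI
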